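/- Consider the stochastic multiplicative-weights Markov chain on the dual payoff space: states are cumulative payoff vectors y = (y₁,…,y_N) reachable from y⁰, and from state y the chain moves to (yᵢ + ∑_{j≠i} A^{(ij)} e_{sⱼ})ᵢ with probability ∏ⱼ x_{j sⱼ} where x_j = ∇h_j*(y_j) > 0 componentwise. If the network zero-sum game has a rational fully-mixed Nash equilibrium x* with ∑_{j≠i} A^{(ij)} x*_j = 0 for all i, then this Markov chain on its countable reachable state space is irreducible. -/

import Mathlib

open Finset Matrix

variable {N : ℕ} {S : Fin N → ℕ}

/-- One step of the dual-space payoff dynamics: when the pure profile `s` is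
realized, each agent `i`'s cumulative payoff vector is updated by
`yᵢ ↦ yᵢ + ∑_{j ≠ i} A^{(ij)} e_{sⱼ}`. -/
def dualStep (A : ∀ i j : Fin N, Matrix (Fin (S i)) (Fin (S j)) ℝ)
    (y : ∀ i, Fin (S i) → ℝ) (s : ∀ j, Fin (S j)) : ∀ i, Fin (S i) → ℝ :=
  fun i => y i + ∑ j ∈ Finset.univ.erase i, (A i j).mulVec (Pi.single (s j) 1)

/-- The one-step (positive-probability) transition relation of the stochastic
FTRL dual chain: since the FTRL map `∇h*` always outputs strictly positive
probability vectors, every pure profile `s` is realized with positive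
probability, so `y'` is reachable from `y` in one step with positive probability
iff `y' = dualStep A y s` for some profile `s`. -/
def dualRel (A : ∀ i j : Fin N, Matrix (Fin (S i)) (Fin (S j)) ℝ)
    (y y' : ∀ i, Fin (S i) → ℝ) : Prop :=
  ∃ s : ∀ j, Fin (S j), y' = dualStep A y s

namespace DualAux

variable (A : ∀ i j : Fin N, Matrix (Fin (S i)) (Fin (S j)) ℝ)

/-- The increment vector of one step with pure profile `s`. -/
def V (s : ∀ j, Fin (S j)) : ∀ i, Fin (S i) → ℝ :=
  fun i => ∑ j ∈ Finset.univ.erase i, (A i j).mulVec (Pi.single (s j) 1)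

lemma dualStep_eq (y : ∀ i, Fin (S i) → ℝ) (s : ∀ j, Fin (S j)) :
    dualStep A y s = y + V A s := rfl

/-- `w` is a loopable displacement: from any state one can reach state + w. -/
def Loop (w : ∀ i, Fin (S i) → ℝ) : Prop :=
  ∀ y, Relation.ReflTransGen (dualRel A) y (y + w)

lemma loop_V (s : ∀ j, Fin (S j)) : Loop A (V A s) := fun y =>
  Relation.ReflTransGen.single ⟨s, (dualStep_eq A y s).symm⟩

lemma loop_zero : Loop A 0 := fun y => by
  simpa using (Relation.ReflTransGen.refl : Relation.ReflTransGen (dualRel A) y y)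

lemma loop_add {w1 w2} (h1 : Loop A w1) (h2 : Loop A w2) : Loop A (w1 + w2) := fun y => by
  have h := (h1 y).trans (h2 (y + w1))
  rwa [add_assoc] at h

lemma loop_nsmul {w} (h : Loop A w) : ∀ n : ℕ, Loop A (n • w)
  | 0 => by simpa using loop_zero A
  | (n + 1) => by
      have h' := loop_add A (loop_nsmul h n) h
      rwa [← succ_nsmul] at h'

lemma loop_sum {ι : Type*} [DecidableEq ι] (F : Finset ι) (f : ι → ∀ i, Fin (S i) → ℝ)
    (h : ∀ s ∈ F, Loop A (f s)) : Loop A (∑ s ∈ F, f s) := by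
  induction F using Finset.induction with
  | empty => simpa using loop_zero A
  | insert _ _ hx ih =>
      rw [Finset.sum_insert hx]
      exact loop_add A (h _ (Finset.mem_insert_self _ _))
        (ih fun s hs => h s (Finset.mem_insert_of_mem hs))

end DualAux

open DualAux

/-- For a network zero-sum game with a rational fully-mixed Nash
equilibrium `x*` satisfying `∑_{j≠i} A^{(ij)} x*_j = 0` for all `i`, the Markov
chain on the countable state space of payoff vectors reachable from `y⁰`
(every pure profile having positive probability, since `∇h* > 0`) is
irreducible: every reachable state can be reached from every other reachable
state in finitely many positive-probability steps. -/
theorem dual_chain_irreducible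
    (N : ℕ) (S : Fin N → ℕ)
    (A : ∀ i j : Fin N, Matrix (Fin (S i)) (Fin (S j)) ℝ)
    (hzs : ∀ i j, A i j = -(A j i)ᵀ)
    (xstar : ∀ i, Fin (S i) → ℝ)
    (hmix : ∀ i k, 0 < xstar i k)
    (hsum : ∀ i, ∑ k, xstar i k = 1)
    (hrat : ∃ b : ℕ, 0 < b ∧ ∀ i k, ∃ c : ℕ, 0 < c ∧ xstar i k = (c : ℝ) / b)
    (hNE : ∀ i, ∑ j ∈ Finset.univ.erase i, (A i j).mulVec (xstar j) = 0)
    (y0 : ∀ i, Fin (S i) → ℝ) :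
    ∀ y y', Relation.ReflTransGen (dualRel A) y0 y →
      Relation.ReflTransGen (dualRel A) y0 y' →
      Relation.ReflTransGen (dualRel A) y y' := by
  classical
  obtain ⟨b, hb, hc⟩ := hrat
  choose c hcpos hceq using hc
  have hbR : (b : ℝ) ≠ 0 := Nat.cast_ne_zero.2 hb.ne'
  have hcb : ∀ l, ∑ k, (c l k : ℝ) = (b : ℝ) := by
    intro l
    calc ∑ k, (c l k : ℝ) = ∑ k, xstar l k * b := by
          refine Finset.sum_congr rfl fun k _ => ?_
          rw [hceq l k]; field_simp
      _ = (b : ℝ) := by rw [← Finset.sum_mul, hsum l, one_mul]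
  set m : (∀ j, Fin (S j)) → ℕ := fun s => ∏ j, c j (s j) with hm
  have mpos : ∀ s, 1 ≤ m s := by
    intro s
    have : 0 < m s := Finset.prod_pos fun j _ => hcpos j (s j)
    omega
  -- the key algebraic identity: the equilibrium loop has zero total displacement
  have key : ∑ s : (∀ j, Fin (S j)), m s • V A s = 0 := by
    funext i a
    have hsplit : ∀ (j : Fin N), ∑ s : (∀ j, Fin (S j)), (m s : ℝ) * A i j a (s j)
        = (b : ℝ) ^ (N - 1) * ((b : ℝ) * ((A i j).mulVec (xstar j)) a) := by
      intro j
      set h : Fin (S j) → ℝ := fun k => A i j a k with hh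
      set G : ∀ l, Fin (S l) → ℝ :=
        Function.update (fun l (k : Fin (S l)) => (c l k : ℝ)) j
          (fun k => (c j k : ℝ) * h k) with hG
      have claim1 : ∀ s : (∀ j, Fin (S j)), (m s : ℝ) * h (s j) = ∏ l, G l (s l) := by
        intro s
        have e1 : ∏ l, G l (s l)
            = G j (s j) * ∏ l ∈ Finset.univ.erase j, G l (s l) :=
          (Finset.mul_prod_erase _ _ (Finset.mem_univ j)).symm
        have e2 : G j (s j) = (c j (s j) : ℝ) * h (s j) := by
          rw [hG, Function.update_self]
        have e3 : ∀ l ∈ Finset.univ.erase j, G l (s l) = (c l (s l) : ℝ) := by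
          intro l hl
          rw [hG, Function.update_of_ne (Finset.ne_of_mem_erase hl)]
        have e4 : (m s : ℝ) = (c j (s j) : ℝ) * ∏ l ∈ Finset.univ.erase j, (c l (s l) : ℝ) := by
          rw [hm]
          push_cast
          exact (Finset.mul_prod_erase _ _ (Finset.mem_univ j)).symm
        rw [e1, e2, Finset.prod_congr rfl e3, e4]
        ring
      have claim2 : ∑ s : (∀ j, Fin (S j)), ∏ l, G l (s l) = ∏ l, ∑ k, G l k :=
        (Fintype.prod_sum G).symm
      have claim3 : ∏ l, ∑ k, G l k
          = (∑ k, (c j k : ℝ) * h k) * (b : ℝ) ^ (N - 1) := by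
        rw [← Finset.mul_prod_erase _ _ (Finset.mem_univ j)]
        congr 1
        · rw [hG, Function.update_self]
        · rw [Finset.prod_congr rfl (fun l hl => ?_), Finset.prod_const,
            Finset.card_erase_of_mem (Finset.mem_univ j), Finset.card_univ,
            Fintype.card_fin]
          rw [hG, Function.update_of_ne (Finset.ne_of_mem_erase hl)]
          exact hcb l
      have claim4 : ∑ k, (c j k : ℝ) * h k = (b : ℝ) * ((A i j).mulVec (xstar j)) a := by
        rw [Matrix.mulVec, dotProduct, Finset.mul_sum]
        refine Finset.sum_congr rfl fun k _ => ?_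
        rw [hceq j k, hh]
        field_simp
      calc ∑ s : (∀ j, Fin (S j)), (m s : ℝ) * A i j a (s j)
          = ∑ s : (∀ j, Fin (S j)), ∏ l, G l (s l) :=
            Finset.sum_congr rfl fun s _ => claim1 s
        _ = ∏ l, ∑ k, G l k := claim2
        _ = (∑ k, (c j k : ℝ) * h k) * (b : ℝ) ^ (N - 1) := claim3
        _ = (b : ℝ) ^ (N - 1) * ((b : ℝ) * ((A i j).mulVec (xstar j)) a) := by
            rw [claim4]; ring
    have hVeval : ∀ s, (m s • V A s) i a
        = ∑ j ∈ Finset.univ.erase i, (m s : ℝ) * A i j a (s j) := by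
      intro s
      have : (V A s) i a = ∑ j ∈ Finset.univ.erase i, A i j a (s j) := by
        rw [V, Finset.sum_apply]
        refine Finset.sum_congr rfl fun j _ => ?_
        simp [Matrix.mulVec_single]
      simp only [Pi.smul_apply, this, nsmul_eq_mul, Finset.mul_sum]
    have hNEa : ∑ j ∈ Finset.univ.erase i, ((A i j).mulVec (xstar j)) a = 0 := by
      have h0 := congrFun (hNE i) a
      rwa [Finset.sum_apply] at h0
    calc (∑ s : (∀ j, Fin (S j)), m s • V A s) i a
        = ∑ s : (∀ j, Fin (S j)), ∑ j ∈ Finset.univ.erase i, (m s : ℝ) * A i j a (s j) := by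
          rw [Finset.sum_apply, Finset.sum_apply]
          exact Finset.sum_congr rfl fun s _ => hVeval s
      _ = ∑ j ∈ Finset.univ.erase i, ∑ s : (∀ j, Fin (S j)), (m s : ℝ) * A i j a (s j) :=
          Finset.sum_comm
      _ = ∑ j ∈ Finset.univ.erase i,
            (b : ℝ) ^ (N - 1) * ((b : ℝ) * ((A i j).mulVec (xstar j)) a) :=
          Finset.sum_congr rfl fun j _ => hsplit j
      _ = (b : ℝ) ^ (N - 1) * ((b : ℝ) * ∑ j ∈ Finset.univ.erase i, ((A i j).mulVec (xstar j)) a) := by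
          rw [Finset.mul_sum, Finset.mul_sum]
      _ = 0 := by rw [hNEa]; simp
  -- every step can be undone, using the zero-displacement loop
  have loop_neg : ∀ s0 : (∀ j, Fin (S j)), Loop A (-(V A s0)) := by
    intro s0
    set n : (∀ j, Fin (S j)) → ℕ := fun s => if s = s0 then m s - 1 else m s with hn
    have hval : (∑ s : (∀ j, Fin (S j)), n s • V A s) = -(V A s0) := by
      have h2 : (∑ s : (∀ j, Fin (S j)), n s • V A s) + V A s0
          = ∑ s : (∀ j, Fin (S j)), m s • V A s := by
        rw [← Finset.add_sum_erase _ (fun s => n s • V A s) (Finset.mem_univ s0),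
          ← Finset.add_sum_erase _ (fun s => m s • V A s) (Finset.mem_univ s0)]
        have e1 : ∀ s ∈ Finset.univ.erase s0, n s • V A s = m s • V A s := by
          intro s hs
          rw [hn]
          simp [Finset.ne_of_mem_erase hs]
        rw [Finset.sum_congr rfl e1]
        have e2 : n s0 • V A s0 + V A s0 = m s0 • V A s0 := by
          rw [← succ_nsmul]
          congr 1
          rw [hn]
          simp [Nat.sub_add_cancel (mpos s0)]
        calc (n s0 • V A s0 + ∑ s ∈ Finset.univ.erase s0, m s • V A s) + V A s0
            = (n s0 • V A s0 + V A s0) + ∑ s ∈ Finset.univ.erase s0, m s • V A s := by abel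
          _ = m s0 • V A s0 + ∑ s ∈ Finset.univ.erase s0, m s • V A s := by rw [e2]
      have h3 : (∑ s : (∀ j, Fin (S j)), n s • V A s) + V A s0 = 0 := h2.trans key
      exact eq_neg_of_add_eq_zero_left h3
    have := loop_sum A Finset.univ (fun s => n s • V A s)
      (fun s _ => loop_nsmul A (loop_V A s) (n s))
    rwa [hval] at this
  have rev : ∀ {y y' : ∀ i, Fin (S i) → ℝ}, dualRel A y y' →
      Relation.ReflTransGen (dualRel A) y' y := by
    rintro y y' ⟨s, rfl⟩
    have h := (loop_neg s) (dualStep A y s)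
    have heq : dualStep A y s + -(V A s) = y := by rw [dualStep_eq]; abel
    rwa [heq] at h
  have hsymm : ∀ {y y' : ∀ i, Fin (S i) → ℝ}, Relation.ReflTransGen (dualRel A) y y' →
      Relation.ReflTransGen (dualRel A) y' y := by
    intro y y' h
    induction h with
    | refl => exact Relation.ReflTransGen.refl
    | tail _ h2 ih => exact (rev h2).trans ih
  intro y y' h h'
  exact (hsymm h).trans h'
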